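/- Let p ≥ 1 be an integer, F > 0, γ > 0 with γ² ≥ 8pF^{2p−1}, and λ₁ = (γ/(4pF^{2p−1}))(1 + √(1 − 8pF^{2p−1}/γ²)). Then for all x ∈ [0,F] one has (F^{2p} − x^{2p})·(λ₁(γ − 2pλ₁x^{2p−1}) − 1) ≥ 0. -/

import Mathlib

theorem stmt_10 (p : ℕ) (hp : 1 ≤ p) (F γ : ℝ) (hF : 0 < F) (hγ : 0 < γ)
    (hγ2 : 8 * p * F ^ (2 * p - 1) ≤ γ ^ 2) :
    ∀ x ∈ Set.Icc (0:ℝ) F,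
      0 ≤ (F ^ (2 * p) - x ^ (2 * p)) *
        ((γ / (4 * p * F ^ (2 * p - 1)) *
          (1 + Real.sqrt (1 - 8 * p * F ^ (2 * p - 1) / γ ^ 2))) *
          (γ - 2 * p * (γ / (4 * p * F ^ (2 * p - 1)) *
            (1 + Real.sqrt (1 - 8 * p * F ^ (2 * p - 1) / γ ^ 2))) *
            x ^ (2 * p - 1)) - 1) := by
  intro x hx
  obtain ⟨hx0, hxF⟩ := hx
  have hp0 : (0:ℝ) < (p:ℝ) := by exact_mod_cast hp
  set q := 2 * p - 1 with hq
  have hA : (0:ℝ) < F ^ q := pow_pos hF q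
  have hγ2' : (0:ℝ) < γ ^ 2 := by positivity
  have h1 : (0:ℝ) ≤ 1 - 8 * p * F ^ q / γ ^ 2 := by
    rw [sub_nonneg, div_le_one hγ2']
    exact hγ2
  set s := Real.sqrt (1 - 8 * p * F ^ q / γ ^ 2) with hsdef
  have hs0 : 0 ≤ s := Real.sqrt_nonneg _
  have hs2 : s ^ 2 = 1 - 8 * p * F ^ q / γ ^ 2 := Real.sq_sqrt h1
  set lam := γ / (4 * p * F ^ q) * (1 + s) with hlamdef
  have hlam0 : 0 ≤ lam := by
    apply mul_nonneg
    · apply div_nonneg hγ.le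
      positivity
    · linarith
  have hs2' : γ ^ 2 * s ^ 2 = γ ^ 2 - 8 * p * F ^ q := by
    rw [hs2]; field_simp
  have key : lam * (γ - 2 * p * lam * F ^ q) - 1 = 0 := by
    rw [hlamdef]
    have h4 : (4:ℝ) * p * F ^ q ≠ 0 := by positivity
    field_simp
    linear_combination (-2:ℝ) * hs2'
  have hxq : x ^ q ≤ F ^ q := pow_le_pow_left₀ hx0 hxF q
  have hfac : 0 ≤ lam * (γ - 2 * p * lam * x ^ q) - 1 := by
    nlinarith [key, mul_nonneg (mul_nonneg hlam0 hlam0) (sub_nonneg.2 hxq), hp0]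
  have hxp : x ^ (2 * p) ≤ F ^ (2 * p) := pow_le_pow_left₀ hx0 hxF (2 * p)
  exact mul_nonneg (by linarith) hfac
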